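/- arXiv:1101.5908 — 4 statements merged into one kernel-verified Lean document; each statement's English description precedes it below -/
import Mathlib

section
/- Let H be a complex Hilbert space, A a star-subalgebra of the algebra of bounded operators on H, and T a densely defined self-adjoint unbounded operator on H such that: (i) T − i admits a bounded two-sided inverse R that is a compact operator; (ii) every a ∈ A maps dom T into dom T, and the commutator x ↦ T(a x) − a(T x), defined on dom T, extends to a bounded operator on H. Let M : H → H be a bounded self-adjoint operator. Then for the operator T + M with domain dom T: (1) T + M is self-adjoint; (2) T + M − i admits a bounded two-sided inverse that is a compact operator; (3) for every a ∈ A, the commutator x ↦ (T + M)(a x) − a((T + M)x), defined on dom T, extends to a bounded operator on H. (That is, perturbing the Dirac operator of a spectral triple by a bounded self-adjoint operator again yields a spectral triple.) -/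
open scoped InnerProductSpace

variable {H : Type*} [NormedAddCommGroup H] [InnerProductSpace ℂ H] [CompleteSpace H]

/-- The sum `T + M` of an unbounded operator `T` and a bounded operator `M`,
with domain `dom T`, given by `x ↦ T x + M x`. -/
noncomputable def addBounded (T : H →ₗ.[ℂ] H) (M : H →L[ℂ] H) : H →ₗ.[ℂ] H where
  domain := T.domain
  toFun := T.toFun + (M : H →ₗ[ℂ] H).comp T.domain.subtype

/-- Perturbing the Dirac operator of a spectral triple by a bounded self-adjoint operator
again yields a spectral triple: if `(A, H, T)` satisfies (i) `T - i` has a bounded two-sided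
inverse which is compact, and (ii) each `a ∈ A` preserves `dom T` with `[T, a]` bounded,
then for self-adjoint bounded `M`, the operator `T + M` (with domain `dom T`) is
(1) self-adjoint, (2) has compact resolvent at `i`, and (3) has bounded commutators with
all `a ∈ A`. -/
theorem statement3 (A : StarSubalgebra ℂ (H →L[ℂ] H))
    (T : H →ₗ.[ℂ] H)
    (hdense : Dense (T.domain : Set H))
    (hT : T.adjoint = T)
    (R : H →L[ℂ] H)
    (hRmem : ∀ y : H, R y ∈ T.domain)
    (hRright : ∀ y : H, T ⟨R y, hRmem y⟩ - Complex.I • R y = y)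
    (hRleft : ∀ x : T.domain, R (T x - Complex.I • (x : H)) = (x : H))
    (hRcompact : IsCompactOperator (⇑R))
    (hA : ∀ a ∈ A, ∃ hmap : ∀ x ∈ T.domain, a x ∈ T.domain,
      ∃ B : H →L[ℂ] H, ∀ x : T.domain, B x = T ⟨a x, hmap x x.2⟩ - a (T x))
    (M : H →L[ℂ] H)
    (hM : ∀ x y : H, ⟪M x, y⟫_ℂ = ⟪x, M y⟫_ℂ) :
    (addBounded T M).adjoint = addBounded T M ∧
    (∃ RM : H →L[ℂ] H, ∃ hRMmem : ∀ y : H, RM y ∈ (addBounded T M).domain,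
      (∀ y : H, (addBounded T M) ⟨RM y, hRMmem y⟩ - Complex.I • RM y = y) ∧
      (∀ x : (addBounded T M).domain,
        RM ((addBounded T M) x - Complex.I • (x : H)) = (x : H)) ∧
      IsCompactOperator (⇑RM)) ∧
    (∀ a ∈ A, ∃ hmap : ∀ x ∈ (addBounded T M).domain, a x ∈ (addBounded T M).domain,
      ∃ B : H →L[ℂ] H, ∀ x : (addBounded T M).domain,
        B x = (addBounded T M) ⟨a x, hmap x x.2⟩ - a ((addBounded T M) x)) := by
  classical
  set TM := addBounded T M with hTMdef
  have happ : ∀ x : T.domain, TM x = T x + M (x : H) := fun x => rfl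
  -- symmetry of T
  have hsymT : ∀ x y : T.domain, ⟪T x, (y : H)⟫_ℂ = ⟪(x : H), T y⟫_ℂ := by
    have h := LinearPMap.adjoint_isFormalAdjoint hdense
    rw [hT] at h
    exact h
  have hsymTM : ∀ x y : T.domain, ⟪TM x, (y : H)⟫_ℂ = ⟪(x : H), TM y⟫_ℂ := by
    intro x y
    rw [happ, happ, inner_add_left, inner_add_right, hsymT, hM]
  -- Part 1 : self-adjointness
  have hadj : TM.adjoint = TM := by
    have hle1 : TM ≤ TM.adjoint :=
      LinearPMap.IsFormalAdjoint.le_adjoint (T := TM) (S := TM) hdense hsymTM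
    have hdomle : TM.adjoint.domain ≤ TM.domain := by
      intro y hy
      have hy' : Continuous fun x : T.domain => ⟪y, TM x⟫_ℂ := hy
      have hMc : Continuous fun x : T.domain => ⟪y, M (x : H)⟫_ℂ :=
        Continuous.inner continuous_const (M.continuous.comp continuous_subtype_val)
      have hTc : Continuous fun x : T.domain => ⟪y, T x⟫_ℂ := by
        have heq : (fun x : T.domain => ⟪y, T x⟫_ℂ) =
            fun x : T.domain => ⟪y, TM x⟫_ℂ - ⟪y, M (x : H)⟫_ℂ := by
          funext x
          rw [happ, inner_add_right]
          ring
        rw [heq]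
        exact hy'.sub hMc
      have hmem : y ∈ T.adjoint.domain := (T.mem_adjoint_domain_iff y).mpr hTc
      rwa [hT] at hmem
    have happle : ∀ ⦃x : TM.adjoint.domain⦄ ⦃y : TM.domain⦄, (x : H) = y →
        TM.adjoint x = TM y := by
      intro x y hxy
      refine LinearPMap.adjoint_apply_eq (T := TM) hdense x fun v => ?_
      rw [hxy]
      exact hsymTM y v
    have hle2 : TM.adjoint ≤ TM := ⟨hdomle, happle⟩
    exact LinearPMap.eq_of_le_of_domain_eq hle2 (le_antisymm hdomle hle1.1)
  -- imaginary part of ⟪TM x, x⟫ vanishes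
  have him : ∀ x : T.domain, (⟪TM x, (x : H)⟫_ℂ).im = 0 := by
    intro x
    have h1 : (starRingEnd ℂ) ⟪TM x, (x : H)⟫_ℂ = ⟪TM x, (x : H)⟫_ℂ := by
      rw [inner_conj_symm]
      exact (hsymTM x x).symm
    exact Complex.conj_eq_iff_im.mp h1
  -- lower bound ‖x‖ ≤ ‖(TM - i) x‖
  have hlb : ∀ x : T.domain, ‖(x : H)‖ ≤ ‖TM x - Complex.I • (x : H)‖ := by
    intro x
    have h2 : (⟪TM x - Complex.I • (x : H), (x : H)⟫_ℂ).im = ‖(x : H)‖ ^ 2 := by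
      rw [inner_sub_left, inner_smul_left, inner_self_eq_norm_sq_to_K, Complex.conj_I]
      simp [him x, ← Complex.ofReal_pow]
    have h3 : ‖(x : H)‖ ^ 2 ≤ ‖TM x - Complex.I • (x : H)‖ * ‖(x : H)‖ := by
      calc ‖(x : H)‖ ^ 2 = (⟪TM x - Complex.I • (x : H), (x : H)⟫_ℂ).im := h2.symm
        _ ≤ |(⟪TM x - Complex.I • (x : H), (x : H)⟫_ℂ).im| := le_abs_self _
        _ ≤ ‖⟪TM x - Complex.I • (x : H), (x : H)⟫_ℂ‖ := Complex.abs_im_le_norm _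
        _ = ‖⟪TM x - Complex.I • (x : H), (x : H)⟫_ℂ‖ := rfl
        _ ≤ ‖TM x - Complex.I • (x : H)‖ * ‖(x : H)‖ := norm_inner_le_norm _ _
    nlinarith [norm_nonneg (TM x - Complex.I • (x : H)), norm_nonneg (x : H)]
  -- the bounded operator S = 1 + M R
  set S : H →L[ℂ] H := 1 + M.comp R with hSdef
  have hSz : ∀ z : H, S z = z + M (R z) := fun z => rfl
  have hSx : ∀ x : T.domain, S (T x - Complex.I • (x : H)) = TM x - Complex.I • (x : H) := by
    intro x
    rw [hSz, hRleft x, happ]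
    abel
  have hSz' : ∀ z : H, S z = TM ⟨R z, hRmem z⟩ - Complex.I • (R z) := by
    intro z
    rw [hSz]; show z + M (R z) = (T ⟨R z, hRmem z⟩ + M (R z)) - Complex.I • R z
    calc z + M (R z) = (T ⟨R z, hRmem z⟩ - Complex.I • R z) + M (R z) := by rw [hRright z]
      _ = (T ⟨R z, hRmem z⟩ + M (R z)) - Complex.I • R z := by abel
  -- lower bound for S
  have hSlb : ∀ z : H, ‖z‖ ≤ (1 + ‖M‖) * ‖S z‖ := by
    intro z
    have h1 : ‖R z‖ ≤ ‖S z‖ := by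
      rw [hSz' z]
      exact hlb ⟨R z, hRmem z⟩
    have h2 : ‖z‖ ≤ ‖S z‖ + ‖M‖ * ‖R z‖ := by
      have hz : z = S z - M (R z) := by rw [hSz]; abel
      calc ‖z‖ = ‖S z - M (R z)‖ := by rw [← hz]
        _ ≤ ‖S z‖ + ‖M (R z)‖ := norm_sub_le _ _
        _ ≤ ‖S z‖ + ‖M‖ * ‖R z‖ := add_le_add le_rfl (M.le_opNorm (R z))
    nlinarith [mul_le_mul_of_nonneg_left h1 (norm_nonneg M)]
  -- S is bijective
  have hinj : LinearMap.ker (S : H →ₗ[ℂ] H) = ⊥ := by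
    rw [LinearMap.ker_eq_bot']
    intro z hz
    have := hSlb z
    rw [show S z = 0 from hz] at this
    simp only [norm_zero, mul_zero] at this
    exact norm_le_zero_iff.mp this
  have hanti : AntilipschitzWith (⟨1 + ‖M‖, by positivity⟩ : NNReal) S :=
    S.antilipschitz_of_bound fun z => hSlb z
  have hclosed : IsClosed (Set.range S) := hanti.isClosed_range S.uniformContinuous
  have hsurj : LinearMap.range (S : H →ₗ[ℂ] H) = ⊤ := by
    have hKclosed : IsClosed ((LinearMap.range (S : H →ₗ[ℂ] H) : Submodule ℂ H) : Set H) := by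
      rw [LinearMap.coe_range]
      exact hclosed
    haveI : CompleteSpace (LinearMap.range (S : H →ₗ[ℂ] H) : Submodule ℂ H) := hKclosed.completeSpace_coe
    rw [← Submodule.orthogonal_eq_bot_iff, Submodule.eq_bot_iff]
    intro y hy
    have hy0 : ∀ z : H, ⟪S z, y⟫_ℂ = 0 := fun z =>
      (Submodule.mem_orthogonal _ y).mp hy _ (LinearMap.mem_range_self _ z)
    have h1 : ∀ x : T.domain, ⟪TM x, y⟫_ℂ = -Complex.I * ⟪(x : H), y⟫_ℂ := by
      intro x
      have h := hy0 (T x - Complex.I • (x : H))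
      rw [hSx x, inner_sub_left, inner_smul_left, Complex.conj_I] at h
      linear_combination h
    have hform : ∀ x : T.domain,
        ⟪((-Complex.I) • y - M y : H), (x : H)⟫_ℂ = ⟪y, T x⟫_ℂ := by
      intro x
      have e1 : ⟪y, TM x⟫_ℂ = Complex.I * ⟪y, (x : H)⟫_ℂ := by
        rw [← inner_conj_symm, h1 x]
        simp [map_mul, Complex.conj_I, inner_conj_symm]
      have e2 : ⟪y, M (x : H)⟫_ℂ = ⟪M y, (x : H)⟫_ℂ := by
        calc ⟪y, M (x : H)⟫_ℂ = (starRingEnd ℂ) ⟪M (x : H), y⟫_ℂ := (inner_conj_symm _ _).symm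
          _ = (starRingEnd ℂ) ⟪(x : H), M y⟫_ℂ := by rw [hM]
          _ = ⟪M y, (x : H)⟫_ℂ := inner_conj_symm _ _
      have e3 : ⟪y, TM x⟫_ℂ = ⟪y, T x⟫_ℂ + ⟪y, M (x : H)⟫_ℂ := by
        rw [happ, inner_add_right]
      rw [inner_sub_left, inner_smul_left, map_neg, Complex.conj_I]
      linear_combination e3 + e2 - e1
    have hymem : y ∈ T.adjoint.domain :=
      LinearPMap.mem_adjoint_domain_of_exists y ⟨(-Complex.I) • y - M y, hform⟩
    rw [hT] at hymem
    have hTy : T ⟨y, hymem⟩ = (-Complex.I) • y - M y := by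
      apply hdense.eq_of_inner_left (𝕜 := ℂ)
      intro v hv
      rw [hsymT ⟨y, hymem⟩ ⟨v, hv⟩]
      exact (hform ⟨v, hv⟩).symm
    have hTMy : TM ⟨y, hymem⟩ = (-Complex.I) • y := by
      show T ⟨y, hymem⟩ + M ((⟨y, hymem⟩ : T.domain) : H) = (-Complex.I) • y; rw [hTy]
      have : M ((⟨y, hymem⟩ : T.domain) : H) = M y := rfl
      rw [this]
      abel
    have h4 : (⟪TM ⟨y, hymem⟩, y⟫_ℂ).im = 0 := him ⟨y, hymem⟩
    rw [hTMy, inner_smul_left, map_neg, Complex.conj_I, neg_neg, Complex.mul_im] at h4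
    simp only [Complex.I_re, Complex.I_im, zero_mul, one_mul, zero_add, mul_zero,
      add_zero] at h4
    have him0 : (⟪y, y⟫_ℂ).im = 0 :=
      Complex.conj_eq_iff_im.mp (inner_conj_symm y y)
    have h5 : ⟪y, y⟫_ℂ = 0 := Complex.ext h4 him0
    exact inner_self_eq_zero.mp h5
  set e := ContinuousLinearEquiv.ofBijective S hinj hsurj with hedef
  have he : ∀ z : H, e z = S z := fun z => by
    rw [hedef, ContinuousLinearEquiv.coeFn_ofBijective]
  refine ⟨hadj, ⟨R.comp (e.symm : H →L[ℂ] H), fun y => hRmem _, ?_, ?_, ?_⟩, ?_⟩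
  · -- right inverse
    intro y
    have h := (hSz' (e.symm y)).symm
    calc TM ⟨R (e.symm y), hRmem _⟩ - Complex.I • (R (e.symm y)) = S (e.symm y) := h
      _ = y := ContinuousLinearEquiv.ofBijective_apply_symm_apply S hinj hsurj y
  · -- left inverse
    intro x
    show R (e.symm (TM x - Complex.I • (x : H))) = (x : H)
    rw [← hSx x, ContinuousLinearEquiv.ofBijective_symm_apply_apply]
    exact hRleft x
  · -- compactness
    exact hRcompact.comp_clm (e.symm : H →L[ℂ] H)
  · -- Part 3 : bounded commutators
    intro a ha
    obtain ⟨hmap, B, hB⟩ := hA a ha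
    refine ⟨hmap, B + (M.comp a - a.comp M), ?_⟩
    intro x
    have hBx := hB x
    have e1 : TM ⟨a x, hmap x x.2⟩ = T ⟨a x, hmap x x.2⟩ + M (a x) := rfl
    have e2 : TM x = T x + M x := rfl
    simp only [ContinuousLinearMap.add_apply, ContinuousLinearMap.sub_apply,
      ContinuousLinearMap.comp_apply, hBx, happ, map_add, e1, e2]
    abel
end

section
/- Let H be a complex Hilbert space, T a (possibly unbounded) linear operator on H with domain dom T, and M : H → H a bounded operator such that M maps dom T^k into dom T^k for every k ≥ 1, where dom T¹ = dom T and dom T^{k+1} = {x ∈ dom T : T x ∈ dom T^k}. Let T + M be the operator with domain dom T given by x ↦ T x + M x. Then dom (T + M)^k = dom T^k for every k ≥ 1; in particular ⋂_k dom (T + M)^k = ⋂_k dom T^k. -/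
variable {H : Type*} [NormedAddCommGroup H] [InnerProductSpace ℂ H] [CompleteSpace H]

/-- The domain of the `k`-th power of an unbounded operator `T`:
`dom T⁰ = H`, `dom T¹ = dom T` and `dom T^(k+1) = {x ∈ dom T : T x ∈ dom T^k}`. -/
def domPow (T : H →ₗ.[ℂ] H) : ℕ → Set H
  | 0 => Set.univ
  | k + 1 => {x : H | ∃ hx : x ∈ T.domain, T ⟨x, hx⟩ ∈ domPow T k}

lemma domPow_succ_subset (S : H →ₗ.[ℂ] H) : ∀ k, domPow S (k + 1) ⊆ domPow S k
  | 0 => fun x _ => Set.mem_univ x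
  | k + 1 => fun x ⟨hx, h⟩ => ⟨hx, domPow_succ_subset S k h⟩

lemma domPow_add_mem (T : H →ₗ.[ℂ] H) :
    ∀ k, ∀ x y : H, x ∈ domPow T k → y ∈ domPow T k → x + y ∈ domPow T k
  | 0, _, _, _, _ => Set.mem_univ _
  | k + 1, x, y, ⟨hx, hTx⟩, ⟨hy, hTy⟩ => by
    refine ⟨T.domain.add_mem hx hy, ?_⟩
    have : (⟨x + y, T.domain.add_mem hx hy⟩ : T.domain) = ⟨x, hx⟩ + ⟨y, hy⟩ := rfl
    rw [this, T.map_add]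
    exact domPow_add_mem T k _ _ hTx hTy

lemma domPow_neg_mem (T : H →ₗ.[ℂ] H) :
    ∀ k, ∀ x : H, x ∈ domPow T k → -x ∈ domPow T k
  | 0, _, _ => Set.mem_univ _
  | k + 1, x, ⟨hx, hTx⟩ => by
    refine ⟨T.domain.neg_mem hx, ?_⟩
    have : (⟨-x, T.domain.neg_mem hx⟩ : T.domain) = -⟨x, hx⟩ := rfl
    rw [this, T.map_neg]
    exact domPow_neg_mem T k _ hTx

lemma addBounded_apply (T : H →ₗ.[ℂ] H) (M : H →L[ℂ] H) (x : H) (hx : x ∈ T.domain) :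
    addBounded T M ⟨x, hx⟩ = T ⟨x, hx⟩ + M x := rfl

/-- If the bounded operator `M` maps `dom T^k` into `dom T^k` for every `k ≥ 1`, then
`dom (T + M)^k = dom T^k` for every `k ≥ 1` (where `T + M` has domain `dom T`); in
particular `⋂ k, dom (T + M)^k = ⋂ k, dom T^k`. -/
theorem statement4 (T : H →ₗ.[ℂ] H) (M : H →L[ℂ] H)
    (hmap : ∀ k : ℕ, 1 ≤ k → ∀ x ∈ domPow T k, M x ∈ domPow T k) :
    (∀ k : ℕ, 1 ≤ k → domPow (addBounded T M) k = domPow T k) ∧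
      (⋂ k : ℕ, domPow (addBounded T M) k) = ⋂ k : ℕ, domPow T k := by
  have key : ∀ k : ℕ, 1 ≤ k → domPow (addBounded T M) k = domPow T k := by
    intro k hk
    induction k with
    | zero => exact absurd hk (by norm_num)
    | succ k ih =>
      rcases Nat.eq_zero_or_pos k with rfl | hk'
      · ext x
        constructor
        · rintro ⟨hx, -⟩; exact ⟨hx, Set.mem_univ _⟩
        · rintro ⟨hx, -⟩; exact ⟨hx, Set.mem_univ _⟩
      · have ih := ih hk'
        ext x
        constructor
        · rintro ⟨hx, hval⟩
          refine ⟨hx, ?_⟩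
          rw [ih] at hval
          change T ⟨x, hx⟩ + M x ∈ domPow T k at hval
          -- x ∈ domPow (addBounded T M) k, hence x ∈ domPow T k, so M x ∈ domPow T k
          have hxk : x ∈ domPow T k := by
            rw [← ih]
            exact domPow_succ_subset (addBounded T M) k ⟨hx, by rw [ih]; exact hval⟩
          have hMx : M x ∈ domPow T k := hmap k hk' x hxk
          have : T ⟨x, hx⟩ + M x + -(M x) ∈ domPow T k :=
            domPow_add_mem T k _ _ hval (domPow_neg_mem T k _ hMx)
          simpa using this
        · rintro ⟨hx, hval⟩
          refine ⟨hx, ?_⟩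
          rw [ih, addBounded_apply]
          have hxk : x ∈ domPow T k := domPow_succ_subset T k ⟨hx, hval⟩
          exact domPow_add_mem T k _ _ hval (hmap k hk' x hxk)
  refine ⟨key, ?_⟩
  apply Set.eq_of_subset_of_subset <;>
  · intro x hx
    refine Set.mem_iInter.2 fun k => ?_
    rcases Nat.eq_zero_or_pos k with rfl | hk'
    · exact Set.mem_univ _
    · have := Set.mem_iInter.1 hx k
      first
        | (rw [key k hk'] at this; exact this)
        | (rw [key k hk']; exact this)
end

section
/- For every natural number p ≥ 1 and every real number μ ≥ 1, one has μ^{-p/2} − (μ + 1)^{-p/2} ≤ ((2^p − 1)/2) · μ^{-(p+2)/2}, where x^{r} denotes the real power of a positive real number x by a real exponent r. -/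
/-- Bernoulli inequality for nonpositive exponents: `1 - q*x ≤ (1+x)^(-q)`. -/
lemma bernoulli_neg_aux {q x : ℝ} (hq : 0 ≤ q) (hx : 0 ≤ x) :
    1 - q * x ≤ (1 + x) ^ (-q) := by
  have hx1 : (0:ℝ) < 1 + x := by linarith
  have hqx : (0:ℝ) ≤ q * x := mul_nonneg hq hx
  have hrpos : (0:ℝ) < (1 + x) ^ (-q) := Real.rpow_pos_of_pos hx1 _
  rcases le_or_gt (1 - q * x) 0 with h0 | h0
  · linarith
  rcases le_or_gt q 1 with hq1 | hq1
  · have h1 : (1 + x) ^ q ≤ 1 + q * x :=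
      rpow_one_add_le_one_add_mul_self (by linarith) hq hq1
    have hpos : (0:ℝ) < (1 + x) ^ q := Real.rpow_pos_of_pos hx1 q
    rw [Real.rpow_neg hx1.le]
    rw [inv_eq_one_div, le_div_iff₀ hpos]
    nlinarith
  · set y : ℝ := -x / (1 + x) with hy
    have hy1 : -1 ≤ y := by
      rw [hy, neg_div, neg_le, neg_neg, div_le_one hx1]; linarith
    have hb : 1 + q * y ≤ (1 + y) ^ q :=
      one_add_mul_self_le_rpow_one_add hy1 hq1.le
    have hyx : 1 + y = (1 + x)⁻¹ := by
      rw [hy]; field_simp; ring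
    have hrw : (1 + y) ^ q = (1 + x) ^ (-q) := by
      rw [hyx, Real.inv_rpow hx1.le, ← Real.rpow_neg hx1.le]
    have hyge : -x ≤ y := by
      rw [hy, neg_div]
      have : x / (1 + x) ≤ x := by
        rw [div_le_iff₀ hx1]; nlinarith
      linarith
    have h2 : 1 - q * x ≤ 1 + q * y := by nlinarith
    linarith [hrw ▸ hb]

/-- For every natural number `p ≥ 1` and every real `μ ≥ 1`,
`μ^(-p/2) - (μ+1)^(-p/2) ≤ ((2^p - 1)/2) · μ^(-(p+2)/2)`,
where `^` denotes the real power `Real.rpow`. -/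
theorem statement6 (p : ℕ) (hp : 1 ≤ p) (μ : ℝ) (hμ : 1 ≤ μ) :
    μ ^ (-(p : ℝ) / 2) - (μ + 1) ^ (-(p : ℝ) / 2) ≤
      ((2 ^ p - 1 : ℝ) / 2) * μ ^ (-((p : ℝ) + 2) / 2) := by
  have hμ0 : (0:ℝ) < μ := lt_of_lt_of_le one_pos hμ
  set q : ℝ := (p : ℝ) / 2 with hqdef
  have hq0 : 0 ≤ q := by positivity
  set x : ℝ := μ⁻¹ with hxdef
  have hx0 : 0 ≤ x := by positivity
  have hmul : μ * (1 + x) = μ + 1 := by rw [hxdef]; field_simp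
  have hsplit : (μ + 1) ^ (-(p:ℝ)/2) = μ ^ (-(p:ℝ)/2) * (1 + x) ^ (-q) := by
    rw [← hmul, Real.mul_rpow hμ0.le (by positivity), hqdef, neg_div]
  have hbern := bernoulli_neg_aux hq0 hx0
  have hμp : (0:ℝ) < μ ^ (-(p:ℝ)/2) := Real.rpow_pos_of_pos hμ0 _
  have key : μ ^ (-(p:ℝ)/2) - (μ + 1) ^ (-(p:ℝ)/2) ≤ μ ^ (-(p:ℝ)/2) * (q * x) := by
    rw [hsplit]
    have := mul_le_mul_of_nonneg_left hbern hμp.le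
    nlinarith
  have hx : μ ^ (-(p:ℝ)/2) * x = μ ^ (-((p:ℝ) + 2) / 2) := by
    rw [hxdef, ← Real.rpow_neg_one μ, ← Real.rpow_add hμ0]
    congr 1; ring
  have hμe : (0:ℝ) ≤ μ ^ (-((p:ℝ) + 2) / 2) := (Real.rpow_pos_of_pos hμ0 _).le
  have hcoef : q ≤ (2 ^ p - 1 : ℝ) / 2 := by
    rw [hqdef, div_le_div_iff_of_pos_right two_pos]
    have h2 : p < 2 ^ p := Nat.lt_two_pow_self
    have h2' : (p : ℝ) + 1 ≤ 2 ^ p := by exact_mod_cast h2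
    linarith
  calc μ ^ (-(p:ℝ)/2) - (μ + 1) ^ (-(p:ℝ)/2) ≤ μ ^ (-(p:ℝ)/2) * (q * x) := key
    _ = q * (μ ^ (-(p:ℝ)/2) * x) := by ring
    _ = q * μ ^ (-((p:ℝ) + 2) / 2) := by rw [hx]
    _ ≤ ((2 ^ p - 1 : ℝ) / 2) * μ ^ (-((p:ℝ) + 2) / 2) := by
        exact mul_le_mul_of_nonneg_right hcoef hμe
end

section
/- Let p ≥ 1 be a natural number and μ : ℕ → ℝ a sequence with μ_k ≥ 0 for all k, and suppose there exist a constant c > 0 and N ∈ ℕ such that μ_k ≥ c · k^{2/p} for all k ≥ N. Then the sequence k ↦ μ_k^{-p/2} − (μ_k + 1)^{-p/2} is absolutely summable, i.e., ∑_k |μ_k^{-p/2} − (μ_k + 1)^{-p/2}| < ∞, where real powers x^{r} for r < 0 are taken with the convention 0^{r} = 0. -/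
open Real

/-- Key pointwise estimate: for `x > 0` and `0 < s ≤ p`,
`x^{-s} - (x+1)^{-s} ≤ p * x^{-(s+1)}`. -/
lemma key_est (p : ℕ) (s x : ℝ) (hs : 0 < s) (hsp : s ≤ p) (hx : 0 < x) :
    x ^ (-s) - (x + 1) ^ (-s) ≤ p * x ^ (-(s + 1)) := by
  have hx1 : (0:ℝ) < x + 1 := by linarith
  set t : ℝ := x / (x + 1) with ht
  have ht0 : 0 < t := div_pos hx hx1
  have ht1 : t ≤ 1 := by
    rw [div_le_one hx1]; linarith
  have hfact : (x + 1) ^ (-s) = x ^ (-s) * t ^ s := by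
    rw [ht, Real.div_rpow hx.le hx1.le, Real.rpow_neg hx.le, Real.rpow_neg hx1.le]
    field_simp
  have hber : 1 - (p : ℝ) * (1 - t) ≤ t ^ (p : ℕ) := by
    have := one_add_mul_le_pow (a := t - 1) (by linarith) p
    have h2 : (1 : ℝ) + (p:ℝ) * (t - 1) = 1 - (p:ℝ) * (1 - t) := by ring
    calc 1 - (p:ℝ) * (1 - t) = 1 + (p:ℝ) * (t - 1) := by ring
      _ ≤ (1 + (t - 1)) ^ p := this
      _ = t ^ p := by ring_nf
  have hts : t ^ (p : ℕ) ≤ t ^ s := by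
    rw [← Real.rpow_natCast t p]
    exact Real.rpow_le_rpow_of_exponent_ge ht0 ht1 hsp
  have h1t : 1 - t = 1 / (x + 1) := by
    rw [ht]; field_simp; ring
  have hstep : x ^ (-s) - (x + 1) ^ (-s) ≤ x ^ (-s) * ((p:ℝ) * (1 / (x + 1))) := by
    rw [hfact]
    have : 1 - t ^ s ≤ (p:ℝ) * (1 / (x + 1)) := by
      rw [← h1t]
      nlinarith [hber, hts]
    nlinarith [Real.rpow_nonneg hx.le (-s), this]
  refine hstep.trans ?_
  have hxx : 1 / (x + 1) ≤ x ^ (-(1:ℝ)) := by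
    rw [Real.rpow_neg_one, inv_eq_one_div]
    exact one_div_le_one_div_of_le hx (by linarith)
  have hxm : x ^ (-s) * x ^ (-(1:ℝ)) = x ^ (-(s + 1)) := by
    rw [← Real.rpow_add hx]; ring_nf
  calc x ^ (-s) * ((p:ℝ) * (1 / (x + 1)))
      ≤ x ^ (-s) * ((p:ℝ) * x ^ (-(1:ℝ))) := by
        have hp0 : (0:ℝ) ≤ p := Nat.cast_nonneg p
        have := mul_le_mul_of_nonneg_left hxx hp0
        exact mul_le_mul_of_nonneg_left this (Real.rpow_nonneg hx.le _)
    _ = (p:ℝ) * (x ^ (-s) * x ^ (-(1:ℝ))) := by ring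
    _ = (p:ℝ) * x ^ (-(s + 1)) := by rw [hxm]

/-- If `p ≥ 1` and `(μ_k)` is a nonnegative sequence with `μ_k ≥ c·k^(2/p)` for some
`c > 0` and all sufficiently large `k`, then the sequence
`k ↦ μ_k^(-p/2) - (μ_k + 1)^(-p/2)` is absolutely summable. Here `^` is the real power
`Real.rpow`, with the convention `0 ^ r = 0` for `r < 0`. -/
theorem statement7 (p : ℕ) (hp : 1 ≤ p) (μ : ℕ → ℝ) (hμ : ∀ k, 0 ≤ μ k)
    (hgrow : ∃ c : ℝ, 0 < c ∧ ∃ N : ℕ, ∀ k : ℕ, N ≤ k → c * (k : ℝ) ^ (2 / (p : ℝ)) ≤ μ k) :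
    Summable (fun k : ℕ => |μ k ^ (-(p : ℝ) / 2) - (μ k + 1) ^ (-(p : ℝ) / 2)|) := by
  obtain ⟨c, hc, N, hN⟩ := hgrow
  have hp0 : (0:ℝ) < p := by exact_mod_cast hp
  set s : ℝ := (p : ℝ) / 2 with hsdef
  have hs : 0 < s := by positivity
  have hsp : s ≤ (p : ℝ) := by
    rw [hsdef]; linarith
  -- the comparison sequence
  set C : ℝ := (p : ℝ) * c ^ (-(s + 1)) with hC
  have hsum : Summable (fun k : ℕ => C * (k : ℝ) ^ (-(1 + 2 / (p:ℝ)))) := by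
    apply Summable.mul_left
    rw [Real.summable_nat_rpow]
    have : 0 < 2 / (p:ℝ) := by positivity
    linarith
  apply Summable.of_norm_bounded_eventually_nat hsum
  filter_upwards [Filter.eventually_ge_atTop (max N 1)] with k hk
  have hkN : N ≤ k := le_trans (le_max_left _ _) hk
  have hk1 : 1 ≤ k := le_trans (le_max_right _ _) hk
  have hk0 : (0:ℝ) < (k:ℝ) := by exact_mod_cast hk1
  have hkp : (0:ℝ) < (k:ℝ) ^ (2 / (p:ℝ)) := Real.rpow_pos_of_pos hk0 _
  have hμk : c * (k:ℝ) ^ (2 / (p:ℝ)) ≤ μ k := hN k hkN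
  have hμpos : 0 < μ k := lt_of_lt_of_le (by positivity) hμk
  have hμ1 : (0:ℝ) < μ k + 1 := by linarith
  -- nonnegativity of the difference
  have hmono : (μ k + 1) ^ (-(p:ℝ)/2) ≤ μ k ^ (-(p:ℝ)/2) :=
    Real.rpow_le_rpow_of_nonpos hμpos (by linarith) (by
      have : (0:ℝ) ≤ (p:ℝ)/2 := by positivity
      linarith)
  have hdiff : 0 ≤ μ k ^ (-(p:ℝ)/2) - (μ k + 1) ^ (-(p:ℝ)/2) := by linarith
  have hexp : -(p:ℝ)/2 = -s := by rw [hsdef]; ring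
  have hkey : μ k ^ (-s) - (μ k + 1) ^ (-s) ≤ (p:ℝ) * μ k ^ (-(s + 1)) :=
    key_est p s (μ k) hs hsp hμpos
  -- bound μ k ^ (-(s+1)) by the comparison term
  have hb : μ k ^ (-(s + 1)) ≤ c ^ (-(s+1)) * (k:ℝ) ^ (-(1 + 2/(p:ℝ))) := by
    have h1 : μ k ^ (-(s+1)) ≤ (c * (k:ℝ) ^ (2/(p:ℝ))) ^ (-(s+1)) :=
      Real.rpow_le_rpow_of_nonpos (by positivity) hμk (by
        have : (0:ℝ) ≤ s + 1 := by linarith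
        linarith)
    refine h1.trans_eq ?_
    rw [Real.mul_rpow hc.le hkp.le, ← Real.rpow_mul hk0.le]
    congr 1
    rw [hsdef]
    field_simp
  rw [Real.norm_eq_abs, abs_abs, hexp, abs_of_nonneg (hexp ▸ hdiff)]
  calc μ k ^ (-s) - (μ k + 1) ^ (-s)
      ≤ (p:ℝ) * μ k ^ (-(s+1)) := hkey
    _ ≤ (p:ℝ) * (c ^ (-(s+1)) * (k:ℝ) ^ (-(1 + 2/(p:ℝ)))) := by
        exact mul_le_mul_of_nonneg_left hb (Nat.cast_nonneg p)
    _ = C * (k:ℝ) ^ (-(1 + 2/(p:ℝ))) := by rw [hC]; ring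
end
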